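/- Let L ≥ 0, β₁ ∈ [0,1), K ≥ 0, and let f : ℝ^{m×n} → ℝ be differentiable with L-Lipschitz gradient in Frobenius norm, i.e., ‖∇f(W) − ∇f(W')‖ ≤ L‖W − W'‖ for all W, W'. Let (W_u)_{u≥1} be a sequence of m×n matrices with ‖W_{u+1} − W_u‖ ≤ η_u·K for all u, where η_u = η₀/√u with η₀ > 0. Let n, l be positive integers with 2^l dividing n and P^(l) = A^(l)E^(l). Then for every t ≥ 2, the history term H_t = (1−β₁)·Σ_{j=1}^{t−1} β₁^j·(∇f(W_{t−j}) − ∇f(W_t))·P^(l) satisfies ‖H_t‖ ≤ L·K·Σ_{u=1}^{t−1} η_u·β₁^{t−u}. -/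

import Mathlib

open scoped Matrix

/-- The fold matrix `A^(l) ∈ ℝ^{n × n/2^l}`: (using 0-based indices `i, j`, corresponding to
1-based indices `i+1, j+1`) the entry `A^(l)_{i,j}` is `1/2^l` if
`j·2^l ≤ i < (j+1)·2^l` (i.e. 1-based `(j-1)·2^l + 1 ≤ i ≤ j·2^l`) and `0` otherwise. -/
noncomputable def foldA (n l : ℕ) : Matrix (Fin n) (Fin (n / 2 ^ l)) ℝ :=
  Matrix.of fun i j =>
    if (j : ℕ) * 2 ^ l ≤ (i : ℕ) ∧ (i : ℕ) < ((j : ℕ) + 1) * 2 ^ l then (1 : ℝ) / 2 ^ l else 0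

/-- The unfold matrix `E^(l) ∈ ℝ^{n/2^l × n}`: the entry `E^(l)_{i,j}` is `1` if
`i·2^l ≤ j < (i+1)·2^l` (i.e. 1-based `(i-1)·2^l + 1 ≤ j ≤ i·2^l`) and `0` otherwise. -/
def unfoldE (n l : ℕ) : Matrix (Fin (n / 2 ^ l)) (Fin n) ℝ :=
  Matrix.of fun i j =>
    if (i : ℕ) * 2 ^ l ≤ (j : ℕ) ∧ (j : ℕ) < ((i : ℕ) + 1) * 2 ^ l then (1 : ℝ) else 0

/-- The fold-unfold operator `P^(l) = A^(l) E^(l) ∈ ℝ^{n×n}`. -/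
noncomputable def foldP (n l : ℕ) : Matrix (Fin n) (Fin n) ℝ :=
  foldA n l * unfoldE n l

-- Equip matrices with the Frobenius norm (and the corresponding inner product).
attribute [local instance] Matrix.frobeniusNormedAddCommGroup Matrix.frobeniusNormedSpace
  Matrix.frobeniusIsBoundedSMul

noncomputable local instance matrixFrobeniusInner (m n : ℕ) :
    InnerProductSpace ℝ (Matrix (Fin m) (Fin n) ℝ) where
  inner x y := inner ℝ
    (WithLp.toLp 2 (fun i => WithLp.toLp 2 (x i)) : PiLp 2 fun _ : Fin m => PiLp 2 fun _ : Fin n => ℝ)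
    (WithLp.toLp 2 (fun i => WithLp.toLp 2 (y i)) : PiLp 2 fun _ : Fin m => PiLp 2 fun _ : Fin n => ℝ)
  norm_sq_eq_re_inner x := norm_sq_eq_re_inner (𝕜 := ℝ)
    (WithLp.toLp 2 (fun i => WithLp.toLp 2 (x i)) : PiLp 2 fun _ : Fin m => PiLp 2 fun _ : Fin n => ℝ)
  conj_inner_symm x y := inner_conj_symm _ _
  add_left x y z := inner_add_left (𝕜 := ℝ)
    (WithLp.toLp 2 (fun i => WithLp.toLp 2 (x i)) : PiLp 2 fun _ : Fin m => PiLp 2 fun _ : Fin n => ℝ)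
    (WithLp.toLp 2 (fun i => WithLp.toLp 2 (y i)) : PiLp 2 fun _ : Fin m => PiLp 2 fun _ : Fin n => ℝ)
    (WithLp.toLp 2 (fun i => WithLp.toLp 2 (z i)) : PiLp 2 fun _ : Fin m => PiLp 2 fun _ : Fin n => ℝ)
  smul_left x y r := inner_smul_left (𝕜 := ℝ)
    (WithLp.toLp 2 (fun i => WithLp.toLp 2 (x i)) : PiLp 2 fun _ : Fin m => PiLp 2 fun _ : Fin n => ℝ)
    (WithLp.toLp 2 (fun i => WithLp.toLp 2 (y i)) : PiLp 2 fun _ : Fin m => PiLp 2 fun _ : Fin n => ℝ) r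

lemma foldA_eq (n l : ℕ) : foldA n l = ((2:ℝ)^l)⁻¹ • (unfoldE n l)ᵀ := by
  ext i j
  simp only [foldA, unfoldE, Matrix.transpose_apply, Matrix.smul_apply, Matrix.of_apply,
    smul_eq_mul]
  split <;> simp

lemma unfoldE_mul_transpose (n l : ℕ) (hdvd : 2 ^ l ∣ n) :
    unfoldE n l * (unfoldE n l)ᵀ = ((2:ℝ)^l) • 1 := by
  ext i k
  simp only [Matrix.mul_apply, Matrix.transpose_apply, unfoldE, Matrix.of_apply,
    Matrix.smul_apply, Matrix.one_apply, smul_eq_mul]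
  rcases eq_or_ne i k with rfl | hik
  · rw [if_pos rfl, mul_one]
    have hle : ((i : ℕ) + 1) * 2 ^ l ≤ n := by
      have : (i : ℕ) + 1 ≤ n / 2 ^ l := i.2
      calc ((i : ℕ) + 1) * 2 ^ l ≤ (n / 2 ^ l) * 2 ^ l := Nat.mul_le_mul_right _ this
        _ = n := Nat.div_mul_cancel hdvd
    have key : ∀ x : Fin n,
        ((if (i:ℕ) * 2 ^ l ≤ (x:ℕ) ∧ (x:ℕ) < ((i:ℕ) + 1) * 2 ^ l then (1:ℝ) else 0) *
          (if (i:ℕ) * 2 ^ l ≤ (x:ℕ) ∧ (x:ℕ) < ((i:ℕ) + 1) * 2 ^ l then (1:ℝ) else 0)) =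
        (if (x:ℕ) ∈ Finset.Ico ((i:ℕ) * 2 ^ l) (((i:ℕ) + 1) * 2 ^ l) then (1:ℝ) else 0) := by
      intro x; simp only [Finset.mem_Ico]; split <;> simp_all
    rw [Finset.sum_congr rfl fun x _ => key x]
    rw [Fin.sum_univ_eq_sum_range
      (fun x => if x ∈ Finset.Ico ((i:ℕ) * 2 ^ l) (((i:ℕ) + 1) * 2 ^ l) then (1:ℝ) else 0)]
    rw [Finset.sum_ite_mem]
    have : Finset.range n ∩ Finset.Ico ((i:ℕ) * 2 ^ l) (((i:ℕ) + 1) * 2 ^ l)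
        = Finset.Ico ((i:ℕ) * 2 ^ l) (((i:ℕ) + 1) * 2 ^ l) := by
      rw [Finset.inter_eq_right]
      intro x hx
      simp only [Finset.mem_Ico] at hx
      simp only [Finset.mem_range]
      omega
    rw [this, Finset.sum_const, Nat.card_Ico]
    have : ((i:ℕ) + 1) * 2 ^ l - (i:ℕ) * 2 ^ l = 2 ^ l := by ring_nf; omega
    rw [this]; simp
  · rw [if_neg hik, mul_zero]
    apply Finset.sum_eq_zero
    intro j _
    have hik' : (i : ℕ) ≠ (k : ℕ) := fun h => hik (Fin.ext h)
    by_cases h1 : (i:ℕ) * 2 ^ l ≤ (j:ℕ) ∧ (j:ℕ) < ((i:ℕ) + 1) * 2 ^ l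
    · have h2 : ¬((k:ℕ) * 2 ^ l ≤ (j:ℕ) ∧ (j:ℕ) < ((k:ℕ) + 1) * 2 ^ l) := by
        rintro ⟨h2a, h2b⟩
        have e1 : (j:ℕ) / 2 ^ l = (i:ℕ) := Nat.div_eq_of_lt_le h1.1 h1.2
        have e2 : (j:ℕ) / 2 ^ l = (k:ℕ) := Nat.div_eq_of_lt_le h2a h2b
        exact hik' (e1 ▸ e2)
      rw [if_neg h2, mul_zero]
    · rw [if_neg h1, zero_mul]

lemma foldP_transpose (n l : ℕ) : (foldP n l)ᵀ = foldP n l := by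
  simp [foldP, foldA_eq, Matrix.transpose_mul, Matrix.transpose_smul, Matrix.smul_mul,
    Matrix.mul_smul]

lemma foldP_idem (n l : ℕ) (hdvd : 2 ^ l ∣ n) : foldP n l * foldP n l = foldP n l := by
  rw [foldP, foldA_eq]
  rw [Matrix.smul_mul, Matrix.smul_mul, Matrix.mul_smul]
  rw [show (unfoldE n l)ᵀ * unfoldE n l * ((unfoldE n l)ᵀ * unfoldE n l)
      = (unfoldE n l)ᵀ * (unfoldE n l * (unfoldE n l)ᵀ) * unfoldE n l by
    simp [Matrix.mul_assoc]]
  rw [unfoldE_mul_transpose n l hdvd, Matrix.mul_smul, Matrix.smul_mul, smul_smul, smul_smul]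
  norm_num

lemma frob_inner_eq_trace {m n : ℕ} (X Y : Matrix (Fin m) (Fin n) ℝ) :
    (inner ℝ X Y : ℝ) = Matrix.trace (Xᵀ * Y) := by
  change inner ℝ (WithLp.toLp 2 (fun i => WithLp.toLp 2 (X i)) : PiLp 2 fun _ : Fin m => PiLp 2 fun _ : Fin n => ℝ) (WithLp.toLp 2 (fun i => WithLp.toLp 2 (Y i)) : PiLp 2 fun _ : Fin m => PiLp 2 fun _ : Fin n => ℝ) = _
  simp [PiLp.inner_apply, Matrix.trace, Matrix.mul_apply, Matrix.diag]
  rw [Finset.sum_comm]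
  exact Finset.sum_congr rfl fun _ _ => Finset.sum_congr rfl fun _ _ => by ring

lemma norm_mul_proj_le {m n : ℕ} (M : Matrix (Fin m) (Fin n) ℝ)
    (P : Matrix (Fin n) (Fin n) ℝ) (hsymm : Pᵀ = P) (hidem : P * P = P) :
    ‖M * P‖ ≤ ‖M‖ := by
  have hinner : (inner ℝ (M * P) (M - M * P) : ℝ) = 0 := by
    rw [frob_inner_eq_trace, Matrix.transpose_mul, hsymm, Matrix.mul_sub]
    have : P * Mᵀ * (M * P) = P * (Mᵀ * M * P) := by simp [Matrix.mul_assoc]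
    rw [Matrix.trace_sub, this, Matrix.trace_mul_comm P (Mᵀ * M * P), Matrix.mul_assoc,
      Matrix.mul_assoc, hidem, ← Matrix.mul_assoc]
    rw [Matrix.mul_assoc P Mᵀ M, Matrix.trace_mul_comm P (Mᵀ * M), sub_self]
  have hsq : ‖M * P‖ ^ 2 ≤ ‖M‖ ^ 2 := by
    have := norm_add_sq_real (M * P) (M - M * P)
    rw [hinner] at this
    simp only [add_sub_cancel] at this
    nlinarith [sq_nonneg ‖M - M * P‖]
  calc ‖M * P‖ = Real.sqrt (‖M * P‖ ^ 2) := (Real.sqrt_sq (norm_nonneg _)).symm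
    _ ≤ Real.sqrt (‖M‖ ^ 2) := Real.sqrt_le_sqrt hsq
    _ = ‖M‖ := Real.sqrt_sq (norm_nonneg _)

lemma tele_norm {E : Type*} [SeminormedAddCommGroup E] (W : ℕ → E) (a b : ℕ) (h : a ≤ b) :
    ‖W b - W a‖ ≤ ∑ u ∈ Finset.Ico a b, ‖W (u + 1) - W u‖ := by
  induction b, h using Nat.le_induction with
  | base => simp
  | succ b hab ih =>
    rw [Finset.sum_Ico_succ_top (by omega)]
    calc ‖W (b + 1) - W a‖ ≤ ‖W b - W a‖ + ‖W (b + 1) - W b‖ := by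
          have : W (b+1) - W a = (W b - W a) + (W (b+1) - W b) := by abel
          rw [this]; exact norm_add_le _ _
      _ ≤ _ := by linarith

lemma geom_tail_le (β : ℝ) (hβ0 : 0 ≤ β) (hβ1 : β < 1) (a b : ℕ) :
    ∑ j ∈ Finset.Icc a b, (1 - β) * β ^ j ≤ β ^ a := by
  rcases Nat.lt_or_ge b a with h | h
  · rw [Finset.Icc_eq_empty (by omega)]
    simp [pow_nonneg hβ0]
  · have hne : β ≠ 1 := ne_of_lt hβ1
    rw [← Finset.mul_sum, ← Finset.Ico_add_one_right_eq_Icc, geom_sum_Ico hne (by omega)]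
    have h1 : β - 1 ≠ 0 := by intro h; apply hne; linarith
    have : (1 - β) * ((β ^ (b + 1) - β ^ a) / (β - 1)) = β ^ a - β ^ (b + 1) := by
      field_simp; ring
    rw [this]
    nlinarith [pow_nonneg hβ0 (b + 1)]

/-- History-term bound: let `f` be differentiable with gradient `∇f` that is `L`-Lipschitz in
Frobenius norm, let `(W_u)` satisfy `‖W_{u+1} − W_u‖ ≤ η_u K` with `η_u = η₀/√u`, and let
`P^(l) = A^(l) E^(l)`. Then for `t ≥ 2` the history term
`H_t = (1−β₁) Σ_{j=1}^{t−1} β₁^j (∇f(W_{t−j}) − ∇f(W_t)) P^(l)` satisfies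
`‖H_t‖ ≤ L K Σ_{u=1}^{t−1} η_u β₁^{t−u}`. -/
theorem foam_history_term_bound {m : ℕ} (n l : ℕ) (hn : 0 < n) (hl : 0 < l)
    (hdvd : 2 ^ l ∣ n) (L K η₀ β₁ : ℝ) (hL : 0 ≤ L) (hK : 0 ≤ K) (hη₀ : 0 < η₀)
    (hβ₁ : β₁ ∈ Set.Ico (0 : ℝ) 1)
    (f : Matrix (Fin m) (Fin n) ℝ → ℝ)
    (gradf : Matrix (Fin m) (Fin n) ℝ → Matrix (Fin m) (Fin n) ℝ)
    (hf : ∀ W, HasGradientAt f (gradf W) W)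
    (hLip : ∀ W W', ‖gradf W - gradf W'‖ ≤ L * ‖W - W'‖)
    (W : ℕ → Matrix (Fin m) (Fin n) ℝ)
    (hW : ∀ u, 1 ≤ u → ‖W (u + 1) - W u‖ ≤ (η₀ / Real.sqrt u) * K)
    (t : ℕ) (ht : 2 ≤ t) :
    ‖(1 - β₁) • ∑ j ∈ Finset.Icc 1 (t - 1),
        β₁ ^ j • ((gradf (W (t - j)) - gradf (W t)) * foldP n l)‖ ≤
      L * K * ∑ u ∈ Finset.Icc 1 (t - 1), (η₀ / Real.sqrt u) * β₁ ^ (t - u) := by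
  obtain ⟨hβ0, hβ1⟩ := hβ₁
  set g : ℕ → ℝ := fun u => η₀ / Real.sqrt u with hg
  have hgnn : ∀ u : ℕ, 0 ≤ g u := fun u =>
    div_nonneg hη₀.le (Real.sqrt_nonneg _)
  set S := Finset.Icc 1 (t - 1) with hS
  -- per-term bound
  have key : ∀ j ∈ S, ‖β₁ ^ j • ((gradf (W (t - j)) - gradf (W t)) * foldP n l)‖ ≤
      β₁ ^ j * (L * ∑ u ∈ Finset.Ico (t - j) t, g u * K) := by
    intro j hj
    simp only [hS, Finset.mem_Icc] at hj
    rw [norm_smul, Real.norm_eq_abs, abs_pow, abs_of_nonneg hβ0]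
    apply mul_le_mul_of_nonneg_left _ (pow_nonneg hβ0 j)
    calc ‖(gradf (W (t - j)) - gradf (W t)) * foldP n l‖
        ≤ ‖gradf (W (t - j)) - gradf (W t)‖ :=
          norm_mul_proj_le _ _ (foldP_transpose n l) (foldP_idem n l hdvd)
      _ ≤ L * ‖W (t - j) - W t‖ := hLip _ _
      _ ≤ L * ∑ u ∈ Finset.Ico (t - j) t, g u * K := by
          apply mul_le_mul_of_nonneg_left _ hL
          rw [norm_sub_rev]
          calc ‖W t - W (t - j)‖ ≤ ∑ u ∈ Finset.Ico (t - j) t, ‖W (u + 1) - W u‖ :=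
                tele_norm W _ t (by omega)
            _ ≤ ∑ u ∈ Finset.Ico (t - j) t, g u * K := by
                apply Finset.sum_le_sum
                intro u hu
                simp only [Finset.mem_Ico] at hu
                exact hW u (by omega)
  -- the double sum
  have step1 : ‖(1 - β₁) • ∑ j ∈ S, β₁ ^ j • ((gradf (W (t - j)) - gradf (W t)) * foldP n l)‖
      ≤ ∑ j ∈ S, ∑ u ∈ S, (if t - u ≤ j then (1 - β₁) * β₁ ^ j * (L * (g u * K)) else 0) := by
    rw [norm_smul, Real.norm_eq_abs, abs_of_nonneg (by linarith)]
    calc (1 - β₁) * ‖∑ j ∈ S, β₁ ^ j • ((gradf (W (t - j)) - gradf (W t)) * foldP n l)‖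
        ≤ (1 - β₁) * ∑ j ∈ S, ‖β₁ ^ j • ((gradf (W (t - j)) - gradf (W t)) * foldP n l)‖ :=
          mul_le_mul_of_nonneg_left (norm_sum_le _ _) (by linarith)
      _ ≤ (1 - β₁) * ∑ j ∈ S, β₁ ^ j * (L * ∑ u ∈ Finset.Ico (t - j) t, g u * K) :=
          mul_le_mul_of_nonneg_left (Finset.sum_le_sum key) (by linarith)
      _ = ∑ j ∈ S, ∑ u ∈ S, (if t - u ≤ j then (1 - β₁) * β₁ ^ j * (L * (g u * K)) else 0) := by
          rw [Finset.mul_sum]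
          apply Finset.sum_congr rfl
          intro j hj
          simp only [hS, Finset.mem_Icc] at hj
          have hIco : ∀ u ∈ S, (if t - u ≤ j then (1 - β₁) * β₁ ^ j * (L * (g u * K)) else 0)
              = (if u ∈ Finset.Ico (t - j) t then (1 - β₁) * β₁ ^ j * (L * (g u * K)) else 0) := by
            intro u hu
            simp only [hS, Finset.mem_Icc] at hu
            apply if_congr _ rfl rfl
            rw [Finset.mem_Ico]
            omega
          rw [Finset.sum_congr rfl hIco, Finset.sum_ite_mem]
          have : S ∩ Finset.Ico (t - j) t = Finset.Ico (t - j) t := by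
            rw [Finset.inter_eq_right, hS]
            intro u hu
            simp only [Finset.mem_Ico] at hu
            simp only [Finset.mem_Icc]
            omega
          rw [this]
          simp only [Finset.mul_sum]
          exact Finset.sum_congr rfl fun u _ => by ring
  -- swap and bound
  have step2 : ∑ j ∈ S, ∑ u ∈ S, (if t - u ≤ j then (1 - β₁) * β₁ ^ j * (L * (g u * K)) else 0)
      ≤ L * K * ∑ u ∈ S, g u * β₁ ^ (t - u) := by
    rw [Finset.sum_comm, Finset.mul_sum]
    apply Finset.sum_le_sum
    intro u hu
    simp only [hS, Finset.mem_Icc] at hu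
    have hIcc : ∀ j ∈ S, (if t - u ≤ j then (1 - β₁) * β₁ ^ j * (L * (g u * K)) else 0)
        = (if j ∈ Finset.Icc (t - u) (t - 1) then (L * (g u * K)) * ((1 - β₁) * β₁ ^ j) else 0) := by
      intro j hj
      simp only [hS, Finset.mem_Icc] at hj
      rw [show (1 - β₁) * β₁ ^ j * (L * (g u * K)) = (L * (g u * K)) * ((1 - β₁) * β₁ ^ j) by ring]
      apply if_congr _ rfl rfl
      rw [Finset.mem_Icc]
      omega
    rw [Finset.sum_congr rfl hIcc, Finset.sum_ite_mem]
    have hsub : S ∩ Finset.Icc (t - u) (t - 1) = Finset.Icc (t - u) (t - 1) := by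
      rw [Finset.inter_eq_right, hS]
      intro j hj
      simp only [Finset.mem_Icc] at hj ⊢
      omega
    rw [hsub, ← Finset.mul_sum]
    calc L * (g u * K) * ∑ j ∈ Finset.Icc (t - u) (t - 1), (1 - β₁) * β₁ ^ j
        ≤ L * (g u * K) * β₁ ^ (t - u) := by
          apply mul_le_mul_of_nonneg_left (geom_tail_le β₁ hβ0 hβ1 _ _)
          positivity
      _ = L * K * (g u * β₁ ^ (t - u)) := by ring
  exact le_trans step1 step2
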